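/- Let G = (V, E) be a finite simple graph, ŵ : E → ℝ a weight function with ŵ(e) ≥ 1 for every e ∈ E, Δw : E → ℝ a nonnegative function, and w = ŵ + Δw. Let 0 < ε' ≤ 1/5. Let M be a matching of G with free-vertex set F, let M* be a maximum ŵ-weight matching of G, let y : V → ℝ be nonnegative, let Ω be a finite family of odd-cardinality subsets of V, and let z : Ω → ℝ be nonnegative. Suppose: (i) every B ∈ Ω is full with respect to M, i.e. exactly (|B|−1)/2 edges of M have both endpoints in B; (ii) near domination: yz(e) ≥ w(e) − ε' for every e ∈ E; (iii) near tightness: yz(e) ≤ (1 + 4ε') · w(e) for every e ∈ M; (iv) accumulated free vertex duals: Σ_{f∈F} y(f) ≤ ε' · ŵ(M*); (v) bounded weight change: Σ_{e∈E} Δw(e) ≤ ε' · ŵ(M*). Then ŵ(M) ≥ (1 − 10ε') · ŵ(M*). -/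

import Mathlib

open Finset
open scoped Classical

variable {V : Type*}

/-- `M` is a matching of the simple graph `G`: a set of edges of `G`,
no two of which share an endpoint. -/
def IsMatching (G : SimpleGraph V) (M : Finset (Sym2 V)) : Prop :=
  (M : Set (Sym2 V)) ⊆ G.edgeSet ∧
    ∀ e ∈ M, ∀ f ∈ M, e ≠ f → ∀ v : V, v ∈ e → v ∉ f

/-- The total weight of a finite set of edges. -/
def mWeight (w : Sym2 V → ℝ) (M : Finset (Sym2 V)) : ℝ := ∑ e ∈ M, w e

/-- A vertex is `M`-free if it is not an endpoint of any edge of `M`. -/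
def IsFreeVtx (M : Finset (Sym2 V)) (v : V) : Prop := ∀ e ∈ M, v ∉ e

/-- `yz(e) = y(u) + y(v) + ∑_{B ∈ Ω, u ∈ B, v ∈ B} z(B)` for an edge `e = uv`. -/
noncomputable def yzval (y : V → ℝ) (Ω : Finset (Finset V)) (z : Finset V → ℝ) :
    Sym2 V → ℝ :=
  Sym2.lift ⟨fun u v => y u + y v + ∑ B ∈ Ω, (if u ∈ B ∧ v ∈ B then z B else 0),
    fun u v => by
      have h : ∀ B : Finset V, (u ∈ B ∧ v ∈ B) = (v ∈ B ∧ u ∈ B) :=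
        fun B => propext and_comm
      simp only [h]
      ring⟩

/-- `‖e‖ = (‖u‖ + ‖v‖)/2` for an edge `e = uv`, given vertex weights `‖·‖`. -/
def edgeNorm (nrm : V → ℕ) : Sym2 V → ℕ :=
  Sym2.lift ⟨fun u v => (nrm u + nrm v) / 2, fun u v => by simp [Nat.add_comm]⟩

/-- A walk is alternating (for a path starting at a free vertex): its edges at even
positions are unmatched and its edges at odd positions are matched. -/
def IsAlternating (G : SimpleGraph V) (M : Finset (Sym2 V)) {u v : V}
    (p : G.Walk u v) : Prop :=
  ∀ (i : ℕ) (h : i < p.edges.length), (p.edges.get ⟨i, h⟩ ∈ M ↔ i % 2 = 1)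

section MyHelpers
variable [Fintype V] [DecidableEq V]

lemma my_matching_sub {G : SimpleGraph V} {M N : Finset (Sym2 V)}
    (hM : IsMatching G M) (hNM : N ⊆ M) : IsMatching G N :=
  ⟨fun e he => hM.1 (hNM he), fun e he f hf hne v hv => hM.2 e (hNM he) f (hNM hf) hne v hv⟩

lemma my_count_le_one {G : SimpleGraph V} {M : Finset (Sym2 V)}
    (hM : IsMatching G M) (v : V) :
    (M.filter (fun e => v ∈ e)).card ≤ 1 := by
  apply Finset.card_le_one.2
  intro e he f hf
  simp only [Finset.mem_filter] at he hf
  by_contra hne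
  exact hM.2 e he.1 f hf.1 hne v he.2 hf.2

lemma my_double_count (N : Finset (Sym2 V)) (g : V → ℝ) (S : Finset V) :
    ∑ e ∈ N, ∑ v ∈ S.filter (· ∈ e), g v
      = ∑ v ∈ S, ((N.filter (fun e => v ∈ e)).card : ℝ) * g v := by
  calc ∑ e ∈ N, ∑ v ∈ S.filter (· ∈ e), g v
      = ∑ e ∈ N, ∑ v ∈ S, if v ∈ e then g v else 0 := by
        simp [Finset.sum_filter]
    _ = ∑ v ∈ S, ∑ e ∈ N, if v ∈ e then g v else 0 := Finset.sum_comm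
    _ = ∑ v ∈ S, ((N.filter (fun e => v ∈ e)).card : ℝ) * g v := by
        refine Finset.sum_congr rfl fun v _ => ?_
        rw [← Finset.sum_filter, Finset.sum_const, nsmul_eq_mul]

lemma my_matching_mass_le {G : SimpleGraph V} {N : Finset (Sym2 V)}
    (hN : IsMatching G N) (g : V → ℝ) (hg : ∀ v, 0 ≤ g v) (S : Finset V) :
    ∑ e ∈ N, ∑ v ∈ S.filter (· ∈ e), g v ≤ ∑ v ∈ S, g v := by
  rw [my_double_count]
  refine Finset.sum_le_sum fun v _ => ?_
  have h1 : ((N.filter (fun e => v ∈ e)).card : ℝ) ≤ 1 := by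
    exact_mod_cast my_count_le_one hN v
  nlinarith [hg v]

/-- Expansion of `yzval` on an edge of the graph. -/
lemma my_yzval_expand {G : SimpleGraph V} [DecidableRel G.Adj]
    (y : V → ℝ) (Ω : Finset (Finset V)) (z : Finset V → ℝ)
    {e : Sym2 V} (he : e ∈ G.edgeFinset) :
    yzval y Ω z e = (∑ v ∈ Finset.univ.filter (· ∈ e), y v)
      + ∑ B ∈ Ω, (if (∀ x ∈ e, x ∈ B) then z B else 0) := by
  induction e using Sym2.ind with
  | _ u v =>
    have hadj : G.Adj u v := by
      rwa [SimpleGraph.mem_edgeFinset, SimpleGraph.mem_edgeSet] at he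
    have huv : u ≠ v := G.ne_of_adj hadj
    have h1 : Finset.univ.filter (· ∈ (s(u,v) : Sym2 V)) = {u, v} := by
      ext x; simp [Sym2.mem_iff]
    rw [h1, Finset.sum_pair huv]
    simp only [yzval, Sym2.lift_mk, Sym2.ball]
    ring

/-- Number of matching edges fully inside `B` is at most `|B|/2`. -/
lemma my_inside_count {G : SimpleGraph V} [DecidableRel G.Adj] {N : Finset (Sym2 V)}
    (hN : IsMatching G N) (B : Finset V) :
    2 * (N.filter (fun e => ∀ v ∈ e, v ∈ B)).card ≤ B.card := by
  set K := N.filter (fun e => ∀ v ∈ e, v ∈ B) with hK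
  have hKN : K ⊆ N := Finset.filter_subset _ _
  have hKm : IsMatching G K := my_matching_sub hN hKN
  have hmass := my_matching_mass_le hKm (fun _ => (1 : ℝ)) (fun _ => zero_le_one) B
  have hsum : ∀ e ∈ K, ∑ v ∈ B.filter (· ∈ e), (1 : ℝ) = 2 := by
    intro e he
    induction e using Sym2.ind with
    | _ a b =>
      have hadj : G.Adj a b := hKm.1 he
      have hab : a ≠ b := G.ne_of_adj hadj
      have hin : ∀ x ∈ (s(a,b) : Sym2 V), x ∈ B := (Finset.mem_filter.1 he).2
      have h1 : B.filter (· ∈ (s(a,b) : Sym2 V)) = {a, b} := by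
        ext x
        simp only [Finset.mem_filter, Finset.mem_insert, Finset.mem_singleton, Sym2.mem_iff]
        constructor
        · rintro ⟨_, h⟩; exact h
        · rintro (rfl | rfl)
          · exact ⟨hin x (by simp), Or.inl rfl⟩
          · exact ⟨hin x (by simp), Or.inr rfl⟩
      rw [h1, Finset.sum_pair hab]; norm_num
  rw [Finset.sum_congr rfl hsum, Finset.sum_const, Finset.sum_const] at hmass
  simp only [nsmul_eq_mul, mul_one] at hmass
  have h2 : ((2 * K.card : ℕ) : ℝ) ≤ (B.card : ℝ) := by push_cast; linarith
  exact_mod_cast h2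
end MyHelpers

/-- Relaxed complementary slackness certification: if the matching `M`,
duals `y, z` on the full blossoms `Ω`, and weight modifiers `Δw` satisfy near domination,
near tightness, accumulated free vertex duals, and bounded weight change with parameter
`0 < ε' ≤ 1/5`, then `ŵ(M) ≥ (1 − 10ε') · ŵ(M*)` for a maximum `ŵ`-weight matching `M*`. -/
theorem mwm_relaxed_slackness_certificate
    [Fintype V] [DecidableEq V]
    (G : SimpleGraph V) [DecidableRel G.Adj]
    (what dw : Sym2 V → ℝ)
    (hwhat : ∀ e ∈ G.edgeFinset, 1 ≤ what e)
    (hdw : ∀ e ∈ G.edgeFinset, 0 ≤ dw e)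
    (w : Sym2 V → ℝ) (hw : ∀ e : Sym2 V, w e = what e + dw e)
    (ε' : ℝ) (hε0 : 0 < ε') (hε1 : ε' ≤ 1 / 5)
    (M Mstar : Finset (Sym2 V))
    (hM : IsMatching G M)
    (hMstar : IsMatching G Mstar)
    (hMstarMax : ∀ N : Finset (Sym2 V), IsMatching G N →
      mWeight what N ≤ mWeight what Mstar)
    (y : V → ℝ) (hy : ∀ v : V, 0 ≤ y v)
    (Ω : Finset (Finset V)) (hodd : ∀ B ∈ Ω, Odd B.card)
    (z : Finset V → ℝ) (hz : ∀ B ∈ Ω, 0 ≤ z B)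
    -- (i) every `B ∈ Ω` is full with respect to `M`
    (hfull : ∀ B ∈ Ω, 2 * (M.filter (fun e => ∀ v ∈ e, v ∈ B)).card + 1 = B.card)
    -- (ii) near domination
    (hdom : ∀ e ∈ G.edgeFinset, w e - ε' ≤ yzval y Ω z e)
    -- (iii) near tightness
    (htight : ∀ e ∈ M, yzval y Ω z e ≤ (1 + 4 * ε') * w e)
    -- (iv) accumulated free vertex duals
    (hfree : ∑ f ∈ Finset.univ.filter (fun v : V => IsFreeVtx M v), y f ≤
      ε' * mWeight what Mstar)
    -- (v) bounded weight change
    (hbounded : ∑ e ∈ G.edgeFinset, dw e ≤ ε' * mWeight what Mstar) :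
    (1 - 10 * ε') * mWeight what Mstar ≤ mWeight what M := by
  classical
  have hMsub : Mstar ⊆ G.edgeFinset := fun e he =>
    SimpleGraph.mem_edgeFinset.2 (hMstar.1 he)
  have hMsub' : M ⊆ G.edgeFinset := fun e he =>
    SimpleGraph.mem_edgeFinset.2 (hM.1 he)
  set Wstar := mWeight what Mstar with hWs
  have hW0 : 0 ≤ Wstar :=
    Finset.sum_nonneg fun e he => le_trans zero_le_one (hwhat e (hMsub he))
  have hK0 : 0 ≤ mWeight what M :=
    Finset.sum_nonneg fun e he => le_trans zero_le_one (hwhat e (hMsub' he))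
  have hcard : (Mstar.card : ℝ) ≤ Wstar := by
    rw [hWs, mWeight]
    calc (Mstar.card : ℝ) = ∑ _e ∈ Mstar, (1 : ℝ) := by simp
      _ ≤ ∑ e ∈ Mstar, what e := Finset.sum_le_sum fun e he => hwhat e (hMsub he)
  -- expansion of ∑ yzval over a set of edges of G
  have hexp : ∀ N : Finset (Sym2 V), N ⊆ G.edgeFinset →
      ∑ e ∈ N, yzval y Ω z e
        = (∑ e ∈ N, ∑ v ∈ Finset.univ.filter (· ∈ e), y v)
          + ∑ B ∈ Ω, z B * ((N.filter (fun e => ∀ v ∈ e, v ∈ B)).card : ℝ) := by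
    intro N hNsub
    calc ∑ e ∈ N, yzval y Ω z e
        = ∑ e ∈ N, ((∑ v ∈ Finset.univ.filter (· ∈ e), y v)
            + ∑ B ∈ Ω, (if (∀ x ∈ e, x ∈ B) then z B else 0)) :=
          Finset.sum_congr rfl fun e he => my_yzval_expand y Ω z (hNsub he)
      _ = (∑ e ∈ N, ∑ v ∈ Finset.univ.filter (· ∈ e), y v)
          + ∑ e ∈ N, ∑ B ∈ Ω, (if (∀ x ∈ e, x ∈ B) then z B else 0) :=
          Finset.sum_add_distrib
      _ = _ := by
          congr 1
          rw [Finset.sum_comm]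
          refine Finset.sum_congr rfl fun B _ => ?_
          rw [← Finset.sum_filter, Finset.sum_const, nsmul_eq_mul, mul_comm]
  -- step 1: Wstar ≤ ∑_{e ∈ M*} w e
  have h1 : Wstar ≤ ∑ e ∈ Mstar, w e := by
    rw [hWs, mWeight]
    refine Finset.sum_le_sum fun e he => ?_
    rw [hw e]; linarith [hdw e (hMsub he)]
  -- step 2: domination on M*
  have h2 : ∑ e ∈ Mstar, w e ≤ (∑ e ∈ Mstar, yzval y Ω z e) + ε' * Mstar.card := by
    have : ∑ e ∈ Mstar, w e ≤ ∑ e ∈ Mstar, (yzval y Ω z e + ε') :=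
      Finset.sum_le_sum fun e he => by linarith [hdom e (hMsub he)]
    rw [Finset.sum_add_distrib, Finset.sum_const, nsmul_eq_mul] at this
    linarith
  -- step 3: ∑_{M*} yz ≤ ∑ y + ∑_B z B (|B|-1)/2
  have h3 : ∑ e ∈ Mstar, yzval y Ω z e
      ≤ (∑ v : V, y v) + ∑ B ∈ Ω, z B * (((B.card : ℝ) - 1) / 2) := by
    rw [hexp Mstar hMsub]
    gcongr ?_ + ?_
    · exact my_matching_mass_le hMstar y hy Finset.univ
    · refine Finset.sum_le_sum fun B hB => ?_
      have hcnt := my_inside_count hMstar B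
      obtain ⟨m, hm⟩ := hodd B hB
      have hle : (Mstar.filter (fun e => ∀ v ∈ e, v ∈ B)).card ≤ m := by omega
      have hle' : ((Mstar.filter (fun e => ∀ v ∈ e, v ∈ B)).card : ℝ)
          ≤ ((B.card : ℝ) - 1) / 2 := by
        have : (B.card : ℝ) = 2 * m + 1 := by exact_mod_cast hm
        rw [this]
        push_cast
        have : ((Mstar.filter (fun e => ∀ v ∈ e, v ∈ B)).card : ℝ) ≤ (m : ℝ) := by
          exact_mod_cast hle
        linarith
      exact mul_le_mul_of_nonneg_left hle' (hz B hB)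
  -- step 4: ∑ y ≤ free duals + vertex part over M
  have h4 : (∑ v : V, y v)
      ≤ (∑ f ∈ Finset.univ.filter (fun v : V => IsFreeVtx M v), y f)
        + ∑ e ∈ M, ∑ v ∈ Finset.univ.filter (· ∈ e), y v := by
    rw [my_double_count M y Finset.univ]
    have hsplit := Finset.sum_filter_add_sum_filter_not Finset.univ
      (fun v : V => IsFreeVtx M v) y
    rw [← hsplit]
    have hnf : ∑ v ∈ Finset.univ.filter (fun v : V => ¬ IsFreeVtx M v), y v
        ≤ ∑ v : V, ((M.filter (fun e => v ∈ e)).card : ℝ) * y v := by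
      refine le_trans (Finset.sum_le_sum fun v hv => ?_)
        (Finset.sum_le_sum_of_subset_of_nonneg (Finset.filter_subset _ _)
          fun v _ _ => mul_nonneg (Nat.cast_nonneg _) (hy v))
      rw [Finset.mem_filter, IsFreeVtx] at hv
      push_neg at hv
      obtain ⟨e, he, hve⟩ := hv.2
      have hpos : 0 < (M.filter (fun e => v ∈ e)).card :=
        Finset.card_pos.2 ⟨e, Finset.mem_filter.2 ⟨he, hve⟩⟩
      have : (1 : ℝ) ≤ ((M.filter (fun e => v ∈ e)).card : ℝ) := by exact_mod_cast hpos
      nlinarith [hy v]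
    linarith
  -- step 5: fullness gives equality for M's blossom part
  have h5 : ∑ B ∈ Ω, z B * ((M.filter (fun e => ∀ v ∈ e, v ∈ B)).card : ℝ)
      = ∑ B ∈ Ω, z B * (((B.card : ℝ) - 1) / 2) := by
    refine Finset.sum_congr rfl fun B hB => ?_
    have := hfull B hB
    have hc : ((M.filter (fun e => ∀ v ∈ e, v ∈ B)).card : ℝ)
        = ((B.card : ℝ) - 1) / 2 := by
      have h2' : ((2 * (M.filter (fun e => ∀ v ∈ e, v ∈ B)).card + 1 : ℕ) : ℝ)
          = (B.card : ℝ) := by exact_mod_cast this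
      push_cast at h2'
      linarith
    rw [hc]
  -- step 6: tightness on M plus bounded weight change
  have h6 : ∑ e ∈ M, yzval y Ω z e
      ≤ (1 + 4 * ε') * (mWeight what M + ε' * Wstar) := by
    have ha : ∑ e ∈ M, yzval y Ω z e ≤ (1 + 4 * ε') * ∑ e ∈ M, w e := by
      rw [Finset.mul_sum]
      exact Finset.sum_le_sum fun e he => htight e he
    have hb : ∑ e ∈ M, w e = mWeight what M + ∑ e ∈ M, dw e := by
      rw [mWeight, ← Finset.sum_add_distrib]
      exact Finset.sum_congr rfl fun e _ => hw e
    have hcc : ∑ e ∈ M, dw e ≤ ε' * Wstar :=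
      le_trans (Finset.sum_le_sum_of_subset_of_nonneg hMsub' fun e he _ => hdw e he)
        hbounded
    have hfac : (0 : ℝ) ≤ 1 + 4 * ε' := by linarith
    calc ∑ e ∈ M, yzval y Ω z e ≤ (1 + 4 * ε') * ∑ e ∈ M, w e := ha
      _ = (1 + 4 * ε') * (mWeight what M + ∑ e ∈ M, dw e) := by rw [hb]
      _ ≤ (1 + 4 * ε') * (mWeight what M + ε' * Wstar) := by nlinarith
  -- combine: Wstar ≤ 2 ε' Wstar + (1+4ε')(ŵ(M) + ε' Wstar)
  have hMexp : (∑ e ∈ M, ∑ v ∈ Finset.univ.filter (· ∈ e), y v)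
      + ∑ B ∈ Ω, z B * (((B.card : ℝ) - 1) / 2) = ∑ e ∈ M, yzval y Ω z e := by
    rw [hexp M hMsub', h5]
  have hchain : Wstar ≤ 2 * ε' * Wstar + (1 + 4 * ε') * (mWeight what M + ε' * Wstar) := by
    have := mul_le_mul_of_nonneg_left hcard hε0.le
    linarith [h1, h2, h3, h4, h5, h6, hfree]
  -- final arithmetic
  have key : (1 + 4 * ε') * ((1 - 10 * ε') * Wstar) ≤ (1 + 4 * ε') * mWeight what M := by
    nlinarith [mul_nonneg hε0.le hW0, mul_nonneg (mul_nonneg hε0.le hε0.le) hW0]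
  exact le_of_mul_le_mul_left key (by linarith)
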